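/- Let ξ ∈ Λ_𝒪 = 𝒪[[T]] be coprime with T and M = Λ_𝒪/ξΛ_𝒪. Then M^Γ = M[T] = 0 and M_Γ = M/TM ≅ 𝒪/ξ(0)𝒪, so M has finite generalized Γ-Euler characteristic equal to |𝒪/ξ(0)𝒪| = |ξ(0)|_p^{−[𝒪:ℤ_p]} when ξ(0) ≠ 0. -/

import Mathlib

noncomputable section

/-- The coinvariants submodule `tM` (for `t = T = γ - 1`, this is `T·M`, so that
`M_Γ = M ⧸ coinvSub R M t`). -/
noncomputable def coinvSub (R : Type*) [CommRing R] (M : Type*) [AddCommGroup M]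
    [Module R M] (t : R) : Submodule R M :=
  Ideal.span {t} • ⊤

/-- The natural map `g_M : M^Γ → M_Γ`, i.e. from the `t`-torsion submodule
`M[t] = M^Γ` to the coinvariants `M ⧸ tM = M_Γ`: inclusion followed by projection. -/
noncomputable def gGamma (R : Type*) [CommRing R] (M : Type*) [AddCommGroup M]
    [Module R M] (t : R) :
    Submodule.torsionBy R M t →ₗ[R] (M ⧸ coinvSub R M t) :=
  (coinvSub R M t).mkQ.comp (Submodule.torsionBy R M t).subtype

/-- `M` has finite generalized `Γ`-Euler characteristic. -/
noncomputable def FiniteGammaChar (R : Type*) [CommRing R] (M : Type*) [AddCommGroup M]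
    [Module R M] (t : R) : Prop :=
  Finite (LinearMap.ker (gGamma R M t)) ∧
  Finite ((M ⧸ coinvSub R M t) ⧸ LinearMap.range (gGamma R M t))

/-- `|Coker(g_M)|`. -/
noncomputable def gammaCokerCard (R : Type*) [CommRing R] (M : Type*) [AddCommGroup M]
    [Module R M] (t : R) : ℕ :=
  Nat.card ((M ⧸ coinvSub R M t) ⧸ LinearMap.range (gGamma R M t))

/-- `|Ker(g_M)|`. -/
noncomputable def gammaKerCard (R : Type*) [CommRing R] (M : Type*) [AddCommGroup M]
    [Module R M] (t : R) : ℕ :=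
  Nat.card (LinearMap.ker (gGamma R M t))

set_option linter.unusedSectionVars false

/-! ### Auxiliary finiteness results over `ℤ_[p]` -/

lemma finite_quot_of_ne_zero_padic (p : ℕ) [Fact p.Prime] (c : ℤ_[p]) (hc : c ≠ 0) :
    Finite (ℤ_[p] ⧸ Ideal.span {c}) := by
  obtain ⟨n, u, hu⟩ := IsDiscreteValuationRing.eq_unit_mul_pow_irreducible hc PadicInt.irreducible_p
  have hdvd : c ∣ (p : ℤ_[p]) ^ n := ⟨(u⁻¹ : ℤ_[p]ˣ), by
    rw [hu]; rw [mul_comm ((u : ℤ_[p])) _, mul_assoc]; simp⟩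
  have hle : Ideal.span {((p : ℤ_[p]) ^ n)} ≤ Ideal.span {c} :=
    Ideal.span_singleton_le_span_singleton.mpr hdvd
  haveI : NeZero (p ^ n) := ⟨pow_ne_zero n (Fact.out (p := p.Prime)).ne_zero⟩
  have h1 : Finite (ℤ_[p] ⧸ Ideal.span {((p : ℤ_[p]) ^ n)}) := by
    rw [← PadicInt.ker_toZModPow]
    exact Finite.of_injective _ (RingHom.kerLift_injective (PadicInt.toZModPow n))
  exact Finite.of_surjective (Ideal.Quotient.factor hle)
    fun y => by
      obtain ⟨z, rfl⟩ := Ideal.Quotient.mk_surjective y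
      exact ⟨Ideal.Quotient.mk _ z, rfl⟩

lemma exists_dvd_algebraMap (p : ℕ) [Fact p.Prime] (𝒪 : Type*) [CommRing 𝒪] [IsDomain 𝒪]
    [Algebra ℤ_[p] 𝒪] [Module.Finite ℤ_[p] 𝒪]
    (x : 𝒪) (hx : x ≠ 0) : ∃ c : ℤ_[p], c ≠ 0 ∧ x ∣ algebraMap ℤ_[p] 𝒪 c := by
  have hint : IsIntegral ℤ_[p] x := IsIntegral.of_finite ℤ_[p] x
  obtain ⟨P, hP, hPx⟩ := hint
  have hP0 : P ≠ 0 := hP.ne_zero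
  obtain ⟨Q, hndvd, hQ⟩ := P.exists_eq_pow_rootMultiplicity_mul_and_not_dvd hP0 0
  rw [map_zero, sub_zero] at hndvd hQ
  have hc0 : Q.coeff 0 ≠ 0 := fun h => hQ (Polynomial.X_dvd_iff.mpr h)
  refine ⟨Q.coeff 0, hc0, ?_⟩
  have hQx : Polynomial.aeval x Q = 0 := by
    have h2 : Polynomial.aeval x P = 0 := hPx
    rw [hndvd, map_mul, map_pow, Polynomial.aeval_X] at h2
    rcases mul_eq_zero.mp h2 with h | h
    · exact absurd h (pow_ne_zero _ hx)
    · exact h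
  have hsplit : Polynomial.X * Q.divX + Polynomial.C (Q.coeff 0) = Q := Polynomial.X_mul_divX_add Q
  have : x * Polynomial.aeval x Q.divX + algebraMap ℤ_[p] 𝒪 (Q.coeff 0) = 0 := by
    have h3 : Polynomial.aeval x (Polynomial.X * Q.divX + Polynomial.C (Q.coeff 0)) = 0 := by
      rw [hsplit, hQx]
    simp only [map_add, map_mul, Polynomial.aeval_X, Polynomial.aeval_C] at h3; exact h3
  exact ⟨-(Polynomial.aeval x Q.divX), by
    rw [mul_neg, eq_neg_iff_add_eq_zero, add_comm]; exact this⟩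

lemma finite_quot_span_of_ne_zero (p : ℕ) [Fact p.Prime] (𝒪 : Type*) [CommRing 𝒪] [IsDomain 𝒪]
    [Algebra ℤ_[p] 𝒪] [Module.Finite ℤ_[p] 𝒪]
    (x : 𝒪) (hx : x ≠ 0) : Finite (𝒪 ⧸ Ideal.span {x}) := by
  obtain ⟨c, hc, hdvd⟩ := exists_dvd_algebraMap p 𝒪 x hx
  set J : Ideal 𝒪 := Ideal.span {algebraMap ℤ_[p] 𝒪 c} with hJ
  have htors : Module.IsTorsionBySet ℤ_[p] (𝒪 ⧸ J) (Ideal.span {c} : Ideal ℤ_[p]) := by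
    refine (Module.isTorsionBySet_span_singleton_iff c).mpr ?_
    intro q
    obtain ⟨y, rfl⟩ := Ideal.Quotient.mk_surjective q
    have : c • (Ideal.Quotient.mk J y) = Ideal.Quotient.mk J (algebraMap ℤ_[p] 𝒪 c * y) := by
      rw [← Algebra.smul_def]
      rfl
    rw [this, Ideal.Quotient.eq_zero_iff_mem]
    exact Ideal.mul_mem_right y J (Ideal.subset_span rfl)
  letI : Module (ℤ_[p] ⧸ (Ideal.span {c} : Ideal ℤ_[p])) (𝒪 ⧸ J) := htors.module
  haveI : IsScalarTower ℤ_[p] (ℤ_[p] ⧸ (Ideal.span {c} : Ideal ℤ_[p])) (𝒪 ⧸ J) :=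
    htors.isScalarTower
  haveI hfinmod : Module.Finite ℤ_[p] (𝒪 ⧸ J) :=
    Module.Finite.of_surjective (Ideal.Quotient.mkₐ ℤ_[p] J).toLinearMap
      Ideal.Quotient.mk_surjective
  haveI : Module.Finite (ℤ_[p] ⧸ (Ideal.span {c} : Ideal ℤ_[p])) (𝒪 ⧸ J) :=
    Module.Finite.of_restrictScalars_finite ℤ_[p] _ _
  haveI : Finite (ℤ_[p] ⧸ (Ideal.span {c} : Ideal ℤ_[p])) := finite_quot_of_ne_zero_padic p c hc
  haveI : Finite (𝒪 ⧸ J) := Module.finite_of_finite (ℤ_[p] ⧸ (Ideal.span {c} : Ideal ℤ_[p]))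
  have hle : J ≤ Ideal.span {x} := Ideal.span_singleton_le_span_singleton.mpr hdvd
  exact Finite.of_surjective (Ideal.Quotient.factor hle) fun y => by
    obtain ⟨z, rfl⟩ := Ideal.Quotient.mk_surjective y
    exact ⟨Ideal.Quotient.mk _ z, rfl⟩

/-! ### The structure of `Λ_𝒪 ⧸ (ξ)` -/

section Main
variable (𝒪 : Type*) [CommRing 𝒪] [IsDomain 𝒪]

lemma torsion_bot (ξ : PowerSeries 𝒪) (hξ : PowerSeries.constantCoeff ξ ≠ 0) :
    Submodule.torsionBy (PowerSeries 𝒪) (PowerSeries 𝒪 ⧸ Ideal.span {ξ})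
      PowerSeries.X = ⊥ := by
  rw [Submodule.eq_bot_iff]
  rintro m hm
  obtain ⟨f, rfl⟩ := Ideal.Quotient.mk_surjective m
  have h0 : PowerSeries.X • (Ideal.Quotient.mk (Ideal.span {ξ}) f) = 0 :=
    (Submodule.mem_torsionBy_iff _ _).mp hm
  have h1 : Ideal.Quotient.mk (Ideal.span {ξ}) (PowerSeries.X * f) = 0 := by
    rw [← smul_eq_mul]
    exact (Submodule.Quotient.mk_smul _ _ _).trans h0
  rw [Ideal.Quotient.eq_zero_iff_mem, Ideal.mem_span_singleton] at h1
  obtain ⟨g, hg⟩ := h1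
  have hg0 : PowerSeries.constantCoeff g = 0 := by
    have h2 := congrArg (PowerSeries.constantCoeff) hg
    rw [map_mul, map_mul, PowerSeries.constantCoeff_X, zero_mul] at h2
    rcases mul_eq_zero.mp h2.symm with h | h
    · exact absurd h hξ
    · exact h
  obtain ⟨h, hh⟩ := PowerSeries.X_dvd_iff.mpr hg0
  have h3 : PowerSeries.X * f = PowerSeries.X * (ξ * h) := by
    rw [hg, hh]; ring
  have hf : f = ξ * h := mul_left_cancel₀ PowerSeries.X_ne_zero h3
  rw [Ideal.Quotient.eq_zero_iff_mem, Ideal.mem_span_singleton]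
  exact ⟨h, hf⟩

/-- Evaluation at `0` as an `𝒪`-algebra map to `𝒪 ⧸ (ξ(0))`. -/
noncomputable def phi0 (ξ : PowerSeries 𝒪) :
    PowerSeries 𝒪 →ₐ[𝒪] 𝒪 ⧸ Ideal.span {PowerSeries.constantCoeff ξ} where
  toRingHom := (Ideal.Quotient.mk (Ideal.span {PowerSeries.constantCoeff ξ})).comp
      (PowerSeries.constantCoeff)
  commutes' r := by
    simp [PowerSeries.algebraMap_apply]

lemma phi0_surjective (ξ : PowerSeries 𝒪) : Function.Surjective (phi0 𝒪 ξ) := by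
  intro y
  obtain ⟨a, rfl⟩ := Ideal.Quotient.mk_surjective y
  exact ⟨PowerSeries.C a, by
    show Ideal.Quotient.mk _ (PowerSeries.constantCoeff (PowerSeries.C a)) = _
    rw [PowerSeries.constantCoeff_C]⟩

lemma ker_phi0 (ξ : PowerSeries 𝒪) :
    RingHom.ker (phi0 𝒪 ξ) = Ideal.span {ξ} ⊔ Ideal.span {PowerSeries.X} := by
  ext f
  have hmem : ∀ g : PowerSeries 𝒪, phi0 𝒪 ξ g = 0 ↔
      PowerSeries.constantCoeff g ∈ Ideal.span {PowerSeries.constantCoeff ξ} := by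
    intro g
    show Ideal.Quotient.mk _ (PowerSeries.constantCoeff g) = 0 ↔ _
    rw [Ideal.Quotient.eq_zero_iff_mem]
  rw [RingHom.mem_ker, hmem]
  constructor
  · intro h
    obtain ⟨a, ha⟩ := Ideal.mem_span_singleton'.mp h
    refine Submodule.mem_sup.mpr ⟨PowerSeries.C a * ξ,
      Ideal.mem_span_singleton.mpr ⟨PowerSeries.C a, mul_comm _ _⟩,
      f - PowerSeries.C a * ξ, ?_, by ring⟩
    refine Ideal.mem_span_singleton.mpr (PowerSeries.X_dvd_iff.mpr ?_)
    rw [map_sub, map_mul, PowerSeries.constantCoeff_C, ha, sub_self]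
  · intro h
    obtain ⟨u, hu, v, hv, rfl⟩ := Submodule.mem_sup.mp h
    obtain ⟨a, rfl⟩ := Ideal.mem_span_singleton.mp hu
    obtain ⟨b, rfl⟩ := Ideal.mem_span_singleton.mp hv
    rw [map_add, map_mul, map_mul, PowerSeries.constantCoeff_X, zero_mul, add_zero]
    exact Ideal.mem_span_singleton.mpr ⟨PowerSeries.constantCoeff a, rfl⟩

lemma coinv_eq_map (ξ : PowerSeries 𝒪) :
    coinvSub (PowerSeries 𝒪) (PowerSeries 𝒪 ⧸ Ideal.span {ξ}) PowerSeries.X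
      = Submodule.map (Ideal.span {ξ} : Submodule (PowerSeries 𝒪) (PowerSeries 𝒪)).mkQ
          (Ideal.span {(PowerSeries.X : PowerSeries 𝒪)}) := by
  show Ideal.span {PowerSeries.X} •
      (⊤ : Submodule (PowerSeries 𝒪) (PowerSeries 𝒪 ⧸ Ideal.span {ξ})) = _
  conv_rhs => rw [show (Ideal.span {(PowerSeries.X : PowerSeries 𝒪)}
      : Submodule (PowerSeries 𝒪) (PowerSeries 𝒪))
      = Ideal.span {(PowerSeries.X : PowerSeries 𝒪)} •
        (⊤ : Submodule (PowerSeries 𝒪) (PowerSeries 𝒪))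
      from by rw [Ideal.smul_eq_mul, Ideal.mul_top]]
  rw [Submodule.map_smul'', Submodule.map_top, Submodule.range_mkQ]

/-- The coinvariants of `Λ_𝒪 ⧸ (ξ)` are `𝒪 ⧸ (ξ(0))`. -/
noncomputable def coinvEquiv (ξ : PowerSeries 𝒪) :
    ((PowerSeries 𝒪 ⧸ Ideal.span {ξ}) ⧸
        coinvSub (PowerSeries 𝒪) (PowerSeries 𝒪 ⧸ Ideal.span {ξ}) PowerSeries.X)
      ≃ₗ[𝒪] (𝒪 ⧸ Ideal.span {PowerSeries.constantCoeff ξ}) :=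
  (LinearEquiv.restrictScalars 𝒪
    ((Submodule.quotEquivOfEq _ _ (coinv_eq_map 𝒪 ξ)).trans
      ((Submodule.quotientQuotientEquivQuotientSup (Ideal.span {ξ})
          (Ideal.span {PowerSeries.X})).trans
        (Submodule.quotEquivOfEq _ _ (ker_phi0 𝒪 ξ).symm)))).trans
    (Ideal.quotientKerAlgEquivOfSurjective (phi0_surjective 𝒪 ξ)).toLinearEquiv

end Main

/-- for `ξ ∈ Λ_𝒪 = 𝒪[[T]]` coprime with `T` (i.e. `ξ(0) ≠ 0`) and
`M = Λ_𝒪/ξΛ_𝒪`: `M^Γ = M[T] = 0`, `M_Γ = M/TM ≅ 𝒪/ξ(0)𝒪`, so `M` has finite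
generalized `Γ`-Euler characteristic equal to `|𝒪/ξ(0)𝒪|`. -/
theorem stmt11 (p : ℕ) [Fact p.Prime]
    (𝒪 : Type*) [CommRing 𝒪] [IsDomain 𝒪] [IsDiscreteValuationRing 𝒪]
    [Algebra ℤ_[p] 𝒪] [Module.Finite ℤ_[p] 𝒪] [Module.Free ℤ_[p] 𝒪]
    (ξ : PowerSeries 𝒪) (hξ : PowerSeries.constantCoeff ξ ≠ 0) :
    Submodule.torsionBy (PowerSeries 𝒪) (PowerSeries 𝒪 ⧸ Ideal.span {ξ})
        PowerSeries.X = ⊥ ∧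
    Nonempty (((PowerSeries 𝒪 ⧸ Ideal.span {ξ}) ⧸
        coinvSub (PowerSeries 𝒪) (PowerSeries 𝒪 ⧸ Ideal.span {ξ}) PowerSeries.X)
      ≃ₗ[𝒪] (𝒪 ⧸ Ideal.span {PowerSeries.constantCoeff ξ})) ∧
    FiniteGammaChar (PowerSeries 𝒪) (PowerSeries 𝒪 ⧸ Ideal.span {ξ}) PowerSeries.X ∧
    gammaKerCard (PowerSeries 𝒪) (PowerSeries 𝒪 ⧸ Ideal.span {ξ}) PowerSeries.X = 1 ∧
    gammaCokerCard (PowerSeries 𝒪) (PowerSeries 𝒪 ⧸ Ideal.span {ξ}) PowerSeries.X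
      = Nat.card (𝒪 ⧸ Ideal.span {PowerSeries.constantCoeff ξ}) := by
  have h1 : Submodule.torsionBy (PowerSeries 𝒪) (PowerSeries 𝒪 ⧸ Ideal.span {ξ})
      PowerSeries.X = ⊥ := torsion_bot 𝒪 ξ hξ
  haveI hsub : Subsingleton (Submodule.torsionBy (PowerSeries 𝒪)
      (PowerSeries 𝒪 ⧸ Ideal.span {ξ}) PowerSeries.X) := by
    rw [h1]; infer_instance
  haveI hkersub : Subsingleton (LinearMap.ker
      (gGamma (PowerSeries 𝒪) (PowerSeries 𝒪 ⧸ Ideal.span {ξ}) PowerSeries.X)) :=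
    ⟨fun a b => Subtype.ext (Subsingleton.elim _ _)⟩
  have hrange : LinearMap.range
      (gGamma (PowerSeries 𝒪) (PowerSeries 𝒪 ⧸ Ideal.span {ξ}) PowerSeries.X) = ⊥ :=
    LinearMap.range_eq_bot.mpr (Subsingleton.elim _ _)
  have eCoker := (Submodule.quotEquivOfEq _ _ hrange).trans
    (Submodule.quotEquivOfEqBot (⊥ : Submodule (PowerSeries 𝒪)
      ((PowerSeries 𝒪 ⧸ Ideal.span {ξ}) ⧸
        coinvSub (PowerSeries 𝒪) (PowerSeries 𝒪 ⧸ Ideal.span {ξ}) PowerSeries.X)) rfl)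
  have ec := eCoker.toEquiv.trans (coinvEquiv 𝒪 ξ).toEquiv
  haveI hOfin : Finite (𝒪 ⧸ Ideal.span {PowerSeries.constantCoeff ξ}) :=
    finite_quot_span_of_ne_zero p 𝒪 _ hξ
  haveI hcokfin : Finite (((PowerSeries 𝒪 ⧸ Ideal.span {ξ}) ⧸
      coinvSub (PowerSeries 𝒪) (PowerSeries 𝒪 ⧸ Ideal.span {ξ}) PowerSeries.X) ⧸
      LinearMap.range (gGamma (PowerSeries 𝒪)
        (PowerSeries 𝒪 ⧸ Ideal.span {ξ}) PowerSeries.X)) := Finite.of_equiv _ ec.symm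
  refine ⟨h1, ⟨coinvEquiv 𝒪 ξ⟩, ⟨Finite.of_subsingleton, hcokfin⟩, ?_, Nat.card_congr ec⟩
  show Nat.card (LinearMap.ker
    (gGamma (PowerSeries 𝒪) (PowerSeries 𝒪 ⧸ Ideal.span {ξ}) PowerSeries.X)) = 1
  exact Nat.card_of_subsingleton
    (0 : LinearMap.ker (gGamma (PowerSeries 𝒪) (PowerSeries 𝒪 ⧸ Ideal.span {ξ}) PowerSeries.X))
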